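/- arXiv:1207.3459 — 2 statements merged into one kernel-verified Lean document; each statement's English description precedes it below -/
import Mathlib

section
/- Let H be a finite group, let j ≥ 1 be a natural number, let ρ : H → Perm(Fin j) be a group homomorphism, and let U be a countable H-set such that for every subgroup K of H there are infinitely many orbits of U that are H-equivariantly bijective to H ⧸ K. Then there exists an injective function φ : Fin j × U → U such that φ(ρ(h)(i), h • u) = h • φ(i, u) for all h ∈ H, i ∈ Fin j, and u ∈ U. -/
/-- The orbit of `u` is `H`-equivariantly bijective to the coset space `H ⧸ K`. -/
def OrbitIsoTo (H : Type*) [Group H] (K : Subgroup H) {U : Type*} [MulAction H U]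
    (u : U) : Prop :=
  ∃ f : MulAction.orbit H u ≃ (H ⧸ K),
    ∀ (h : H) (v : MulAction.orbit H u), f (h • v) = h • f v

open Classical in
/-- Greedy choice sequence: at step `n`, if `n = e q`, choose a fresh element of `S q`. -/
noncomputable def greedyAux {Q Uq : Type*} (S : Q → Set Uq) (e : Q → ℕ) (dflt : Uq) :
    ℕ → Uq
  | n =>
    if h : ∃ q, e q = n then
      if h2 : (S h.choose \ Set.range (fun m : Fin n => greedyAux S e dflt m)).Nonempty then
        h2.choose
      else dflt
    else dflt
  decreasing_by all_goals exact m.isLt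

open Classical in
theorem greedyAux_mem {Q Uq : Type*} (S : Q → Set Uq) (e : Q → ℕ) (dflt : Uq)
    (he : Function.Injective e) (hS : ∀ q, (S q).Infinite) (q : Q) :
    greedyAux S e dflt (e q) ∈
      S q \ Set.range (fun m : Fin (e q) => greedyAux S e dflt m) := by
  have h : ∃ q', e q' = e q := ⟨q, rfl⟩
  have hq : h.choose = q := he h.choose_spec
  have h2 : (S q \ Set.range (fun m : Fin (e q) => greedyAux S e dflt m)).Nonempty :=
    ((hS q).diff (Set.finite_range _)).nonempty
  have key : greedyAux S e dflt (e q) = h2.choose := by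
    conv_lhs => rw [greedyAux]
    rw [dif_pos h]
    simp only [hq]
    rw [dif_pos h2]
  rw [key]
  exact h2.choose_spec

/-- A countable family of infinite sets admits a system of distinct representatives. -/
theorem exists_injective_mem {Q Uq : Type*} [Countable Q] [Nonempty Uq]
    (S : Q → Set Uq) (hS : ∀ q, (S q).Infinite) :
    ∃ F : Q → Uq, Function.Injective F ∧ ∀ q, F q ∈ S q := by
  obtain ⟨e, he⟩ := Countable.exists_injective_nat Q
  obtain ⟨dflt⟩ := ‹Nonempty Uq›
  refine ⟨fun q => greedyAux S e dflt (e q), ?_, fun q => (greedyAux_mem S e dflt he hS q).1⟩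
  intro q q' hqq'
  by_contra hne
  have hee : e q ≠ e q' := fun hc => hne (he hc)
  rcases hee.lt_or_gt with hlt | hlt
  · exact (greedyAux_mem S e dflt he hS q').2 ⟨⟨e q, hlt⟩, by simpa using hqq'⟩
  · exact (greedyAux_mem S e dflt he hS q).2 ⟨⟨e q', hlt⟩, by simpa using hqq'.symm⟩

/-- An equivariant equivalence has an equivariant inverse. -/
theorem equiv_symm_equivariant {H A B : Type*} [SMul H A] [SMul H B] (f : A ≃ B)
    (hf : ∀ (h : H) (a : A), f (h • a) = h • f a) (h : H) (b : B) :
    f.symm (h • b) = h • f.symm b := by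
  apply f.injective
  rw [Equiv.apply_symm_apply, hf, Equiv.apply_symm_apply]

theorem orbitEquiv_symm_equivariant {H α : Type*} [Group H] [MulAction H α] (x : α)
    (h : H) (w : H ⧸ MulAction.stabilizer H x) :
    (MulAction.orbitEquivQuotientStabilizer H x).symm (h • w)
      = h • (MulAction.orbitEquivQuotientStabilizer H x).symm w := by
  induction w using QuotientGroup.induction_on with
  | H g =>
    apply Subtype.ext
    rw [MulAction.orbit.coe_smul, MulAction.orbitEquivQuotientStabilizer_symm_apply,
      MulAction.Quotient.smul_mk, MulAction.orbitEquivQuotientStabilizer_symm_apply,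
      smul_eq_mul, mul_smul]

theorem orbitEquiv_equivariant {H α : Type*} [Group H] [MulAction H α] (x : α)
    (h : H) (v : MulAction.orbit H x) :
    MulAction.orbitEquivQuotientStabilizer H x (h • v)
      = h • MulAction.orbitEquivQuotientStabilizer H x v := by
  have := orbitEquiv_symm_equivariant x h (MulAction.orbitEquivQuotientStabilizer H x v)
  rw [Equiv.symm_apply_apply] at this
  rw [← this, Equiv.apply_symm_apply]

/-- For a finite group `H`, `j ≥ 1`, a homomorphism `ρ : H →* Perm (Fin j)`, and a
countable `H`-set `U` containing infinitely many orbits of every type, there is an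
injection `Fin j × U → U` which is equivariant for the twisted action
`h • (i, u) = (ρ h i, h • u)` on the source. -/
theorem exists_equivariant_injection_of_copies (H : Type*) [Group H] [Finite H]
    (j : ℕ) (hj : 1 ≤ j) (ρ : H →* Equiv.Perm (Fin j))
    (U : Type*) [Countable U] [MulAction H U]
    (hU : ∀ K : Subgroup H,
      {ω : Quotient (MulAction.orbitRel H U) |
        ∃ u : U, Quotient.mk (MulAction.orbitRel H U) u = ω ∧ OrbitIsoTo H K u}.Infinite) :
    ∃ φ : Fin j × U → U, Function.Injective φ ∧
      ∀ (h : H) (i : Fin j) (u : U), φ (ρ h i, h • u) = h • φ (i, u) := by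
  classical
  rcases isEmpty_or_nonempty U with hE | hne
  · obtain ⟨ω, -⟩ := (hU ⊥).nonempty
    exact hE.elim ω.out
  letI : MulAction H (Fin j) := MulAction.compHom _ ρ
  haveI : Nonempty (Quotient (MulAction.orbitRel H U)) :=
    ⟨Quotient.mk _ hne.some⟩
  set Q := Quotient (MulAction.orbitRel H (Fin j × U)) with hQdef
  let Λ : Q → Subgroup H := fun ω => MulAction.stabilizer H ω.out
  obtain ⟨F, Finj, FS⟩ := exists_injective_mem
    (fun ω : Q => {ω' : Quotient (MulAction.orbitRel H U) |
      ∃ u : U, Quotient.mk (MulAction.orbitRel H U) u = ω' ∧ OrbitIsoTo H (Λ ω) u})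
    (fun ω => hU (Λ ω))
  choose uu huu hiso using FS
  choose f hf using hiso
  let g : ∀ ω : Q, MulAction.orbit H (ω.out) ≃ MulAction.orbit H (uu ω) :=
    fun ω => (MulAction.orbitEquivQuotientStabilizer H ω.out).trans (f ω).symm
  have hgequi : ∀ (ω : Q) (h : H) (v : MulAction.orbit H ω.out),
      g ω (h • v) = h • g ω v := by
    intro ω h v
    show (f ω).symm (MulAction.orbitEquivQuotientStabilizer H ω.out (h • v))
      = h • (f ω).symm (MulAction.orbitEquivQuotientStabilizer H ω.out v)
    rw [orbitEquiv_equivariant, equiv_symm_equivariant (f ω) (hf ω)]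
  have hmem : ∀ x : Fin j × U,
      x ∈ MulAction.orbit H (Quotient.mk (MulAction.orbitRel H (Fin j × U)) x).out := by
    intro x
    have hx : Quotient.mk (MulAction.orbitRel H (Fin j × U)) x
        = Quotient.mk (MulAction.orbitRel H (Fin j × U))
          ((Quotient.mk (MulAction.orbitRel H (Fin j × U)) x).out) :=
      (Quotient.out_eq _).symm
    exact Quotient.exact hx
  let φ : Fin j × U → U := fun x =>
    ↑(g (Quotient.mk (MulAction.orbitRel H (Fin j × U)) x) ⟨x, hmem x⟩)
  have φ_spec : ∀ (x : Fin j × U) (ω : Q) (hx : x ∈ MulAction.orbit H ω.out)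
      (h2 : Quotient.mk (MulAction.orbitRel H (Fin j × U)) x = ω),
      φ x = ↑(g ω ⟨x, hx⟩) := by
    intro x ω hx h2
    subst h2
    rfl
  have hφmem : ∀ x : Fin j × U,
      φ x ∈ MulAction.orbit H (uu (Quotient.mk (MulAction.orbitRel H (Fin j × U)) x)) :=
    fun x => (g _ _).2
  have key : ∀ x : Fin j × U, Quotient.mk (MulAction.orbitRel H U) (φ x)
      = F (Quotient.mk (MulAction.orbitRel H (Fin j × U)) x) := by
    intro x
    rw [← huu]
    exact Quotient.sound (hφmem x)
  have φinj : Function.Injective φ := by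
    intro x y hxy
    have hω : Quotient.mk (MulAction.orbitRel H (Fin j × U)) x
        = Quotient.mk (MulAction.orbitRel H (Fin j × U)) y :=
      Finj (by rw [← key x, ← key y, hxy])
    have hxmem : x ∈ MulAction.orbit H
        (Quotient.mk (MulAction.orbitRel H (Fin j × U)) y).out := hω ▸ hmem x
    have h1 : φ x = ↑(g (Quotient.mk (MulAction.orbitRel H (Fin j × U)) y) ⟨x, hxmem⟩) :=
      φ_spec x _ hxmem hω
    have h2 : φ y = ↑(g (Quotient.mk (MulAction.orbitRel H (Fin j × U)) y) ⟨y, hmem y⟩) :=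
      φ_spec y _ (hmem y) rfl
    have h3 : g (Quotient.mk (MulAction.orbitRel H (Fin j × U)) y) ⟨x, hxmem⟩
        = g (Quotient.mk (MulAction.orbitRel H (Fin j × U)) y) ⟨y, hmem y⟩ :=
      Subtype.ext (by rw [← h1, ← h2, hxy])
    have h4 := (g (Quotient.mk (MulAction.orbitRel H (Fin j × U)) y)).injective h3
    exact congrArg Subtype.val h4
  have φequi : ∀ (h : H) (x : Fin j × U), φ (h • x) = h • φ x := by
    intro h x
    have hω : Quotient.mk (MulAction.orbitRel H (Fin j × U)) (h • x)
        = Quotient.mk (MulAction.orbitRel H (Fin j × U)) x :=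
      Quotient.sound (MulAction.mem_orbit x h)
    have hxm : (h • x) ∈ MulAction.orbit H
        (Quotient.mk (MulAction.orbitRel H (Fin j × U)) x).out := hω ▸ hmem (h • x)
    have h1 : φ (h • x) = ↑(g (Quotient.mk (MulAction.orbitRel H (Fin j × U)) x) ⟨h • x, hxm⟩) :=
      φ_spec _ _ hxm hω
    have h2 : (⟨h • x, hxm⟩ : MulAction.orbit H
        (Quotient.mk (MulAction.orbitRel H (Fin j × U)) x).out) = h • ⟨x, hmem x⟩ :=
      Subtype.ext rfl
    rw [h1, h2, hgequi]
    rfl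
  refine ⟨φ, φinj, fun h i u => ?_⟩
  have hsm : ((ρ h i, h • u) : Fin j × U) = h • ((i, u) : Fin j × U) := rfl
  rw [hsm, φequi]
end

section
/- Let H be a finite group, let j ≥ 1 be a natural number, let ρ : H → Perm(Fin j) be a group homomorphism, and let U be a countable H-set such that for every subgroup K of H there are infinitely many orbits of U that are H-equivariantly bijective to H ⧸ K. Give the type of functions Fin j → U the H-action (h • f)(i) = h • f(ρ(h)⁻¹(i)) (this is a well-defined H-action). Then there exists an H-equivariant bijection (Fin j → U) ≃ U. -/
/-- The twisted action of `H` on `Fin j → U`: `(h • f) i = h • f (ρ(h)⁻¹ i)`. -/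
def twistedAct {H : Type*} [Group H] {j : ℕ} {U : Type*} [MulAction H U]
    (ρ : H →* Equiv.Perm (Fin j)) (h : H) (f : Fin j → U) : Fin j → U :=
  fun i => h • f ((ρ h)⁻¹ i)

namespace EPBAux

open MulAction

variable {H : Type*} [Group H] {X : Type*} [MulAction H X]

/-- The set of stabilizers of points in an orbit class. -/
def Iinv (H : Type*) [Group H] {X : Type*} [MulAction H X]
    (ω : Quotient (MulAction.orbitRel H X)) : Set (Subgroup H) :=
  {K | ∃ x : X, Quotient.mk (MulAction.orbitRel H X) x = ω ∧ MulAction.stabilizer H x = K}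

/-- The set of conjugates of a subgroup. -/
def cset (K : Subgroup H) : Set (Subgroup H) :=
  {K' | ∃ g : H, K.map (MulAut.conj g).toMonoidHom = K'}

lemma mk_smul (h : H) (x : X) :
    Quotient.mk (orbitRel H X) (h • x) = Quotient.mk (orbitRel H X) x :=
  Quotient.sound (MulAction.mem_orbit x h)

lemma Iinv_mk (x : X) :
    Iinv H (Quotient.mk (orbitRel H X) x) = cset (stabilizer H x) := by
  ext K'
  constructor
  · rintro ⟨z, hz, rfl⟩
    have hz' : z ∈ orbit H x := Quotient.exact hz
    obtain ⟨g, rfl⟩ := hz'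
    exact ⟨g, (stabilizer_smul_eq_stabilizer_map_conj g x).symm⟩
  · rintro ⟨g, rfl⟩
    exact ⟨g • x, mk_smul g x, stabilizer_smul_eq_stabilizer_map_conj g x⟩

lemma Iinv_nonempty (ω : Quotient (orbitRel H X)) : ∃ K, K ∈ Iinv H ω := by
  obtain ⟨x, rfl⟩ := Quotient.exists_rep ω
  exact ⟨_, x, rfl, rfl⟩

lemma Iinv_eq_cset {ω : Quotient (orbitRel H X)} {K : Subgroup H} (h : K ∈ Iinv H ω) :
    Iinv H ω = cset K := by
  obtain ⟨x, rfl, rfl⟩ := h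
  exact Iinv_mk x

/-- The underlying function `H ⧸ K → X`, `gK ↦ g • x₀`. -/
def quotToFib (K : Subgroup H) (x₀ : X) (hx : stabilizer H x₀ = K) : H ⧸ K → X :=
  fun q => Quotient.liftOn' q (fun g => g • x₀) (by
    intro a b hab
    have h1 : a⁻¹ * b ∈ stabilizer H x₀ := by
      rw [hx]; exact QuotientGroup.leftRel_apply.mp hab
    have h2 : (a⁻¹ * b) • x₀ = x₀ := h1
    show a • x₀ = b • x₀
    calc a • x₀ = a • ((a⁻¹ * b) • x₀) := by rw [h2]
    _ = b • x₀ := by rw [← mul_smul, mul_inv_cancel_left])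

lemma quotToFib_mk (K : Subgroup H) (x₀ : X) (hx : stabilizer H x₀ = K) (g : H) :
    quotToFib K x₀ hx (g : H ⧸ K) = g • x₀ := rfl

lemma quotToFib_mem (K : Subgroup H) (x₀ : X) (hx : stabilizer H x₀ = K) (q : H ⧸ K) :
    Quotient.mk (orbitRel H X) (quotToFib K x₀ hx q) = Quotient.mk (orbitRel H X) x₀ :=
  Quotient.inductionOn' q fun g => mk_smul g x₀

/-- The equivariant bijection `H ⧸ K ≃ {x // ⟦x⟧ = ⟦x₀⟧}` when `stabilizer x₀ = K`. -/
noncomputable def fibEquiv (K : Subgroup H) (x₀ : X) (hx : stabilizer H x₀ = K) :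
    (H ⧸ K) ≃ {x : X // Quotient.mk (orbitRel H X) x = Quotient.mk (orbitRel H X) x₀} := by
  refine Equiv.ofBijective (fun q => ⟨quotToFib K x₀ hx q, quotToFib_mem K x₀ hx q⟩) ⟨?_, ?_⟩
  · intro q q' hqq'
    induction q using Quotient.inductionOn' with | h a => ?_
    induction q' using Quotient.inductionOn' with | h b => ?_
    have hab : a • x₀ = b • x₀ := congrArg Subtype.val hqq'
    refine Quotient.sound' (QuotientGroup.leftRel_apply.mpr ?_)
    rw [← hx]
    show (a⁻¹ * b) • x₀ = x₀
    rw [mul_smul, ← hab, inv_smul_smul]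
  · rintro ⟨x, hxx⟩
    have hmem : x ∈ orbit H x₀ := Quotient.exact hxx
    obtain ⟨g, rfl⟩ := hmem
    exact ⟨(g : H ⧸ K), Subtype.ext rfl⟩

lemma fibEquiv_smul (K : Subgroup H) (x₀ : X) (hx : stabilizer H x₀ = K) (h : H) (q : H ⧸ K) :
    (fibEquiv K x₀ hx (h • q)).1 = h • (fibEquiv K x₀ hx q).1 := by
  induction q using Quotient.inductionOn' with | h g => ?_
  show quotToFib K x₀ hx (h • (g : H ⧸ K)) = h • quotToFib K x₀ hx (g : H ⧸ K)
  rw [MulAction.Quotient.smul_coe, quotToFib_mk, quotToFib_mk, smul_eq_mul, mul_smul]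

/-- Two orbit classes with the same stabilizer set admit an equivariant bijection
between their fibers. -/
lemma exists_fib_equiv {Y : Type*} [MulAction H Y]
    (ω : Quotient (orbitRel H X)) (ω' : Quotient (orbitRel H Y))
    (hI : Iinv H ω = Iinv H ω') :
    ∃ e : {x : X // Quotient.mk (orbitRel H X) x = ω} ≃
          {y : Y // Quotient.mk (orbitRel H Y) y = ω'},
      ∀ (h : H) (u : {x : X // Quotient.mk (orbitRel H X) x = ω})
        (hu : Quotient.mk (orbitRel H X) (h • u.1) = ω),
        (e ⟨h • u.1, hu⟩).1 = h • (e u).1 := by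
  obtain ⟨x₀, rfl⟩ := Quotient.exists_rep ω
  have hK : stabilizer H x₀ ∈ Iinv H ω' := by
    rw [← hI]; exact ⟨x₀, rfl, rfl⟩
  obtain ⟨y₀, rfl, hy⟩ := hK
  set K := stabilizer H x₀ with hKdef
  have hx : stabilizer H x₀ = K := rfl
  let eX := fibEquiv K x₀ hx
  let eY := fibEquiv K y₀ hy
  refine ⟨eX.symm.trans eY, ?_⟩
  intro h u hu
  have h1 : eX (h • eX.symm u) = ⟨h • u.1, hu⟩ := by
    apply Subtype.ext
    rw [fibEquiv_smul, Equiv.apply_symm_apply]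
  have h2 : eX.symm ⟨h • u.1, hu⟩ = h • eX.symm u := by
    rw [← h1, Equiv.symm_apply_apply]
  show (eY (eX.symm ⟨h • u.1, hu⟩)).1 = h • (eY (eX.symm u)).1
  rw [h2, fibEquiv_smul]

/-- Two countable `H`-sets with infinitely many orbits of every stabilizer type are
equivariantly bijective. -/
theorem key {X Y : Type*} [MulAction H X] [MulAction H Y] [Countable X] [Countable Y]
    (hX : ∀ K : Subgroup H, {ω : Quotient (orbitRel H X) | K ∈ Iinv H ω}.Infinite)
    (hY : ∀ K : Subgroup H, {ω : Quotient (orbitRel H Y) | K ∈ Iinv H ω}.Infinite) :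
    ∃ e : X ≃ Y, ∀ (h : H) (x : X), e (h • x) = h • e x := by
  classical
  have hψ : ∀ s : Set (Subgroup H),
      Nonempty ({ω : Quotient (orbitRel H X) // Iinv H ω = s} ≃
                {ω : Quotient (orbitRel H Y) // Iinv H ω = s}) := by
    intro s
    by_cases hs : ∃ K : Subgroup H, s = cset K
    · obtain ⟨K, rfl⟩ := hs
      have hx' : Infinite {ω : Quotient (orbitRel H X) // Iinv H ω = cset K} :=
        Set.Infinite.to_subtype ((hX K).mono (fun ω h => Iinv_eq_cset h))
      have hy' : Infinite {ω : Quotient (orbitRel H Y) // Iinv H ω = cset K} :=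
        Set.Infinite.to_subtype ((hY K).mono (fun ω h => Iinv_eq_cset h))
      obtain ⟨dX⟩ := nonempty_denumerable
        {ω : Quotient (orbitRel H X) // Iinv H ω = cset K}
      obtain ⟨dY⟩ := nonempty_denumerable
        {ω : Quotient (orbitRel H Y) // Iinv H ω = cset K}
      exact ⟨(@Denumerable.eqv _ dX).trans (@Denumerable.eqv _ dY).symm⟩
    · have hx0 : IsEmpty {ω : Quotient (orbitRel H X) // Iinv H ω = s} := by
        refine ⟨fun ⟨ω, hω⟩ => hs ?_⟩
        obtain ⟨K, hK⟩ := Iinv_nonempty ω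
        exact ⟨K, by rw [← hω]; exact Iinv_eq_cset hK⟩
      have hy0 : IsEmpty {ω : Quotient (orbitRel H Y) // Iinv H ω = s} := by
        refine ⟨fun ⟨ω, hω⟩ => hs ?_⟩
        obtain ⟨K, hK⟩ := Iinv_nonempty ω
        exact ⟨K, by rw [← hω]; exact Iinv_eq_cset hK⟩
      exact ⟨Equiv.equivOfIsEmpty _ _⟩
  let ψ : ∀ s : Set (Subgroup H),
      {ω : Quotient (orbitRel H X) // Iinv H ω = s} ≃
      {ω : Quotient (orbitRel H Y) // Iinv H ω = s} := fun s => (hψ s).some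
  let φ : Quotient (orbitRel H X) ≃ Quotient (orbitRel H Y) :=
    (Equiv.sigmaFiberEquiv (fun ω : Quotient (orbitRel H X) => Iinv H ω)).symm.trans
      ((Equiv.sigmaCongrRight ψ).trans
        (Equiv.sigmaFiberEquiv (fun ω : Quotient (orbitRel H Y) => Iinv H ω)))
  have hφ : ∀ ω, Iinv H (φ ω) = Iinv H ω := by
    intro ω
    have : φ ω = (ψ (Iinv H ω) ⟨ω, rfl⟩).1 := rfl
    rw [this]
    exact (ψ (Iinv H ω) ⟨ω, rfl⟩).2
  have hfib := fun ω : Quotient (orbitRel H X) => exists_fib_equiv ω (φ ω) (hφ ω).symm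
  choose E hE using hfib
  let F : X → Y := fun x => (E (Quotient.mk (orbitRel H X) x) ⟨x, rfl⟩).1
  have hmkF : ∀ x : X, Quotient.mk (orbitRel H Y) (F x) = φ (Quotient.mk (orbitRel H X) x) :=
    fun x => (E _ ⟨x, rfl⟩).2
  have Gcongr : ∀ (ω : Quotient (orbitRel H X))
      (u : {x : X // Quotient.mk (orbitRel H X) x = ω}), (E ω u).1 = F u.1 := by
    rintro ω ⟨x, rfl⟩
    rfl
  have hinj : Function.Injective F := by
    intro x x' h
    have h2 : Quotient.mk (orbitRel H X) x = Quotient.mk (orbitRel H X) x' :=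
      φ.injective (by rw [← hmkF, ← hmkF, h])
    have h3 : (E (Quotient.mk (orbitRel H X) x) ⟨x', h2.symm⟩).1 = F x' :=
      Gcongr _ ⟨x', h2.symm⟩
    have h4 : E (Quotient.mk (orbitRel H X) x) ⟨x, rfl⟩ =
        E (Quotient.mk (orbitRel H X) x) ⟨x', h2.symm⟩ :=
      Subtype.ext (by rw [h3]; exact h)
    have := (E (Quotient.mk (orbitRel H X) x)).injective h4
    exact congrArg Subtype.val this
  have hsurj : Function.Surjective F := by
    intro y
    have hy : Quotient.mk (orbitRel H Y) y = φ (φ.symm (Quotient.mk (orbitRel H Y) y)) :=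
      (φ.apply_symm_apply _).symm
    refine ⟨((E (φ.symm (Quotient.mk (orbitRel H Y) y))).symm ⟨y, hy⟩).1, ?_⟩
    rw [← Gcongr _ ((E _).symm ⟨y, hy⟩)]
    exact congrArg Subtype.val (Equiv.apply_symm_apply (E _) ⟨y, hy⟩)
  refine ⟨Equiv.ofBijective F ⟨hinj, hsurj⟩, ?_⟩
  intro h x
  show F (h • x) = h • F x
  have hu : Quotient.mk (orbitRel H X) (h • x) = Quotient.mk (orbitRel H X) x := mk_smul h x
  have h5 : (E (Quotient.mk (orbitRel H X) x) ⟨h • x, hu⟩).1 = F (h • x) :=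
    Gcongr _ ⟨h • x, hu⟩
  rw [← h5]
  exact hE (Quotient.mk (orbitRel H X) x) h ⟨x, rfl⟩ hu

/-- Type synonym for `Fin j → U` carrying the twisted action. -/
def TP {H : Type*} [Group H] {j : ℕ} (_ : H →* Equiv.Perm (Fin j)) (U : Type*) : Type _ :=
  Fin j → U

instance TP.instCountable {H : Type*} [Group H] {j : ℕ} (ρ : H →* Equiv.Perm (Fin j))
    (U : Type*) [Countable U] : Countable (TP ρ U) :=
  inferInstanceAs (Countable (Fin j → U))

instance TP.instMulAction {H : Type*} [Group H] {j : ℕ} (ρ : H →* Equiv.Perm (Fin j))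
    (U : Type*) [MulAction H U] : MulAction H (TP ρ U) where
  smul := twistedAct ρ
  one_smul f := by
    funext i
    show (1 : H) • f ((ρ 1)⁻¹ i) = f i
    simp
  mul_smul h h' f := by
    funext i
    show (h * h') • f ((ρ (h * h'))⁻¹ i) = twistedAct ρ h (twistedAct ρ h' f) i
    simp [twistedAct, map_mul, mul_inv_rev, mul_smul, Equiv.Perm.mul_apply]

/-- An orbit equivariantly isomorphic to `H ⧸ K` contains a point with stabilizer `K`. -/
lemma orbitIsoTo_exists {U : Type*} [MulAction H U] {K : Subgroup H} {u : U}
    (h : OrbitIsoTo H K u) :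
    ∃ u' : U, Quotient.mk (orbitRel H U) u' = Quotient.mk (orbitRel H U) u ∧
      stabilizer H u' = K := by
  obtain ⟨f, hf⟩ := h
  set w := f.symm (QuotientGroup.mk (1 : H)) with hw
  refine ⟨(w : U), Quotient.sound w.2, ?_⟩
  ext h'
  rw [mem_stabilizer_iff]
  have hcoe : h' • (w : U) = ((h' • w : orbit H u) : U) := (MulAction.orbit.coe_smul).symm
  rw [hcoe]
  rw [show ((w : U) : U) = ((w : orbit H u) : U) from rfl]
  rw [← Subtype.ext_iff]
  rw [← Equiv.apply_eq_iff_eq f, hf, hw, Equiv.apply_symm_apply]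
  rw [MulAction.Quotient.smul_mk]
  rw [smul_eq_mul, mul_one]
  rw [QuotientGroup.eq]
  simp

end EPBAux

open MulAction EPBAux

/-- For a finite group `H`, `j ≥ 1`, a homomorphism `ρ : H →* Perm (Fin j)`, and a
countable `H`-set `U` containing infinitely many orbits of every type: the twisted
formula `(h • f) i = h • f (ρ(h)⁻¹ i)` is a well-defined `H`-action on `Fin j → U`,
and there is an `H`-equivariant bijection `(Fin j → U) ≃ U`. -/
theorem exists_equivariant_power_bijection (H : Type*) [Group H] [Finite H]
    (j : ℕ) (hj : 1 ≤ j) (ρ : H →* Equiv.Perm (Fin j))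
    (U : Type*) [Countable U] [MulAction H U]
    (hU : ∀ K : Subgroup H,
      {ω : Quotient (MulAction.orbitRel H U) |
        ∃ u : U, Quotient.mk (MulAction.orbitRel H U) u = ω ∧ OrbitIsoTo H K u}.Infinite) :
    (∀ f : Fin j → U, twistedAct ρ (1 : H) f = f) ∧
    (∀ (h h' : H) (f : Fin j → U),
      twistedAct ρ (h * h') f = twistedAct ρ h (twistedAct ρ h' f)) ∧
    ∃ e : (Fin j → U) ≃ U, ∀ (h : H) (f : Fin j → U), e (twistedAct ρ h f) = h • e f := by
  classical
  refine ⟨fun f => @one_smul H (TP ρ U) _ (TP.instMulAction ρ U) f,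
    fun h h' f => @mul_smul H (TP ρ U) _ (TP.instMulAction ρ U).toSemigroupAction h h' f, ?_⟩
  -- stabilizer form of the hypothesis on U
  have hstabU : ∀ K : Subgroup H,
      {ω : Quotient (orbitRel H U) | K ∈ Iinv H ω}.Infinite := by
    intro K
    refine (hU K).mono ?_
    rintro ω ⟨u, hu, hiso⟩
    obtain ⟨u', hu', hst⟩ := orbitIsoTo_exists hiso
    exact ⟨u', hu'.trans hu, hst⟩
  -- stabilizer form for the twisted power
  have i₀ : Fin j := ⟨0, hj⟩
  set cmap : U → TP ρ U := fun u _ => u with hcmap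
  have hcm : ∀ (g : H) (u : U), (g • cmap u : TP ρ U) = cmap (g • u) :=
    fun g u => funext fun i => rfl
  have hstabc : ∀ u : U, stabilizer H (cmap u) = stabilizer H u := by
    intro u
    ext h
    simp only [mem_stabilizer_iff]
    constructor
    · intro hh
      exact congrFun hh i₀
    · intro hh
      rw [hcm h u, hh]
  set Φ : Quotient (orbitRel H U) → Quotient (orbitRel H (TP ρ U)) :=
    Quotient.map' cmap (by
      rintro u u' huu'
      obtain ⟨g, hg⟩ := MulAction.orbitRel_apply.mp huu'
      refine MulAction.orbitRel_apply.mpr ⟨g, ?_⟩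
      show g • cmap u' = cmap u
      rw [hcm g u']
      exact congrArg cmap hg) with hΦ
  have hΦinj : Function.Injective Φ := by
    intro ω ω' h
    induction ω using Quotient.inductionOn' with | h u => ?_
    induction ω' using Quotient.inductionOn' with | h u' => ?_
    have h2 : cmap u ∈ orbit H (cmap u') := MulAction.orbitRel_apply.mp (Quotient.exact' h)
    obtain ⟨g, hg⟩ := h2
    refine Quotient.sound' (MulAction.orbitRel_apply.mpr ⟨g, ?_⟩)
    have := congrFun ((hcm g u').symm.trans hg) i₀
    exact this
  have hstabTP : ∀ K : Subgroup H,
      {ω : Quotient (orbitRel H (TP ρ U)) | K ∈ Iinv H ω}.Infinite := by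
    intro K
    refine Set.Infinite.mono ?_ (((hstabU K).image (Set.injOn_of_injective hΦinj)))
    rintro _ ⟨ω, hω, rfl⟩
    obtain ⟨u, rfl, rfl⟩ := hω
    exact ⟨cmap u, rfl, hstabc u⟩
  obtain ⟨e, he⟩ := key (X := TP ρ U) (Y := U) hstabTP hstabU
  exact ⟨e, fun h f => he h f⟩
end
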